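/- Let n, m, ℓ be positive integers and c ∈ (0,1). If n·c^ℓ/(1+c^ℓ) < m/ℓ, then Σ_{w=0}^{⌊m/ℓ⌋} binom(n, w)·c^{ℓw} ≥ (1/(m+1))·(1+c^ℓ)^n. -/

import Mathlib

set_option maxHeartbeats 1000000


/-- Lower bound on a truncated binomial sum: if
`n·c^ℓ/(1+c^ℓ) < m/ℓ` (with `n = mR ≤ m`, `c ∈ (0,1)`), then
`Σ_{w=0}^{⌊m/ℓ⌋} C(n,w)·c^{ℓw} ≥ (1/(m+1))·(1+c^ℓ)^n`. -/
theorem stmt_5 (n m ℓ : ℕ) (hn : 0 < n) (hm : 0 < m) (hℓ : 0 < ℓ)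
    (hnm : n ≤ m) (c : ℝ) (hc : c ∈ Set.Ioo (0 : ℝ) 1)
    (h : (n : ℝ) * c ^ ℓ / (1 + c ^ ℓ) < (m : ℝ) / ℓ) :
    (1 / ((m : ℝ) + 1)) * (1 + c ^ ℓ) ^ n
      ≤ ∑ w ∈ Finset.range (m / ℓ + 1), (n.choose w : ℝ) * c ^ (ℓ * w) := by
  obtain ⟨hc0, hc1⟩ := hc
  have hx0 : (0:ℝ) < c ^ ℓ := pow_pos hc0 ℓ
  have hx1 : c ^ ℓ < 1 := pow_lt_one₀ hc0.le hc1 hℓ.ne'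
  set x : ℝ := c ^ ℓ with hxdef
  set k := m / ℓ with hkdef
  have hsum_eq : (∑ w ∈ Finset.range (k + 1), (n.choose w : ℝ) * c ^ (ℓ * w))
      = ∑ w ∈ Finset.range (k + 1), (n.choose w : ℝ) * x ^ w :=
    Finset.sum_congr rfl fun w _ => by rw [pow_mul]
  rw [hsum_eq]
  set T := ∑ w ∈ Finset.range (k + 1), (n.choose w : ℝ) * x ^ w with hTdef
  clear_value T
  have hx1' : (0:ℝ) < 1 + x := by linarith
  have hm1 : (0:ℝ) < (m:ℝ) + 1 := by positivity
  have hℓ0 : (0:ℝ) < (ℓ:ℝ) := by exact_mod_cast hℓ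
  have hn1 : (1:ℝ) ≤ (n:ℝ) := by exact_mod_cast hn
  have hnm' : (n:ℝ) ≤ (m:ℝ) := by exact_mod_cast hnm
  have hS : (1 + x) ^ n = ∑ w ∈ Finset.range (n + 1), (n.choose w : ℝ) * x ^ w := by
    rw [add_comm, add_pow]
    exact Finset.sum_congr rfl fun w _ => by ring
  have hterm_nonneg : ∀ w : ℕ, (0:ℝ) ≤ (n.choose w : ℝ) * x ^ w := fun w => by positivity
  have hT_nonneg : (0:ℝ) ≤ T := by
    rw [hTdef]; exact Finset.sum_nonneg fun w _ => hterm_nonneg w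
  -- it suffices to show (1+x)^n ≤ (m+1) T
  suffices hST : (1 + x) ^ n ≤ ((m:ℝ) + 1) * T by
    calc (1 / ((m:ℝ) + 1)) * (1 + x) ^ n
        ≤ (1 / ((m:ℝ) + 1)) * (((m:ℝ) + 1) * T) := by
          apply mul_le_mul_of_nonneg_left hST (by positivity)
      _ = T := by field_simp
  -- basic facts about k and q := m/ℓ
  have hmlt : m < ℓ * (k + 1) := by
    show m < ℓ * (m / ℓ + 1)
    have h1 := Nat.div_add_mod m ℓ
    have h2 := Nat.mod_lt m hℓ
    have h3 : ℓ * (m / ℓ + 1) = ℓ * (m / ℓ) + ℓ := by ring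
    omega
  have hkm : ℓ * k ≤ m := Nat.mul_div_le m ℓ
  have hq_lt : (m:ℝ) / ℓ < (k:ℝ) + 1 := by
    rw [div_lt_iff₀ hℓ0]
    have : (m:ℝ) < (ℓ:ℝ) * ((k:ℝ) + 1) := by exact_mod_cast hmlt
    linarith [this]
  have hk_le : (k:ℝ) ≤ (m:ℝ) / ℓ := by
    rw [le_div_iff₀ hℓ0]
    have : (ℓ:ℝ) * (k:ℝ) ≤ (m:ℝ) := by exact_mod_cast hkm
    linarith [this]
  have hxn : x * n < (1 + x) * ((m:ℝ) / ℓ) := by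
    rw [div_lt_iff₀ hx1'] at h
    linarith [h]
  clear_value x
  clear_value k
  rcases le_or_gt n k with hnk | hkn
  · -- case n ≤ k : truncated sum contains the full binomial sum
    have hsub : Finset.range (n + 1) ⊆ Finset.range (k + 1) := by
      apply Finset.range_subset_range.2; omega
    have : (1 + x) ^ n ≤ T := by
      rw [hS, hTdef]
      exact Finset.sum_le_sum_of_subset_of_nonneg hsub fun w _ _ => hterm_nonneg w
    have hmT : (0:ℝ) ≤ (m:ℝ) * T := mul_nonneg (Nat.cast_nonneg m) hT_nonneg
    linarith [this, hmT]
  · rcases Nat.eq_zero_or_pos k with hk0 | hk1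
    · -- case k = 0 : Bernoulli argument, (1+x)^n ≤ 1/(1-q) ≤ m+1, T = 1
      have hdiv0 : m / ℓ = 0 := by rw [← hkdef, hk0]
      have hmℓ : m < ℓ := ((Nat.div_eq_zero_iff).1 hdiv0).resolve_left hℓ.ne'
      have hmℓ' : (m:ℝ) + 1 ≤ (ℓ:ℝ) := by exact_mod_cast hmℓ
      set q : ℝ := (m:ℝ) / ℓ with hqdef
      clear_value q
      have hq0 : 0 < q := by rw [hqdef]; positivity
      have hk0' : (k:ℝ) = 0 := by exact_mod_cast hk0
      have hq1 : q < 1 := by rw [hqdef]; linarith [hq_lt, hk0']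
      have hqm : q * ((m:ℝ) + 1) ≤ m := by
        rw [hqdef, div_mul_eq_mul_div, div_le_iff₀ hℓ0]
        nlinarith [hmℓ', hm1]
      have hnq : 0 < (n:ℝ) - q := by linarith
      have hx_lt : x < q / ((n:ℝ) - q) := by
        rw [lt_div_iff₀ hnq]
        nlinarith [hxn]
      have h1x : 1 + x < (n:ℝ) / ((n:ℝ) - q) := by
        rw [lt_div_iff₀ hnq]
        nlinarith [hx_lt, hnq]
      have hbern : 1 - q ≤ (((n:ℝ) - q) / n) ^ n := by
        have hb := one_add_mul_le_pow (a := -(q / n)) (by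
          have : q / n ≤ 1 := by
            rw [div_le_one (by linarith)]
            linarith
          linarith) n
        have he : (1 + -(q/n)) = ((n:ℝ) - q) / n := by
          field_simp
          ring
        rw [he] at hb
        have he2 : 1 + (n:ℝ) * -(q / n) = 1 - q := by
          field_simp
          ring
        rw [he2] at hb
        exact hb
      have hpos : (0:ℝ) < (((n:ℝ) - q) / n) ^ n := by positivity
      have hSle : (1 + x) ^ n ≤ ((m:ℝ) + 1) := by
        have h1 : (1 + x) ^ n ≤ ((n:ℝ) / ((n:ℝ) - q)) ^ n :=
          pow_le_pow_left₀ hx1'.le h1x.le n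
        have h2 : ((n:ℝ) / ((n:ℝ) - q)) ^ n = ((((n:ℝ) - q) / n) ^ n)⁻¹ := by
          rw [← inv_pow]
          congr 1
          rw [inv_div]
        have h3 : ((((n:ℝ) - q) / n) ^ n)⁻¹ ≤ (1 - q)⁻¹ := by
          apply inv_anti₀ (by linarith) hbern
        have h4 : (1 - q)⁻¹ ≤ (m:ℝ) + 1 := by
          rw [inv_le_iff_one_le_mul₀ (by linarith)]
          nlinarith [hqm]
        calc (1 + x) ^ n ≤ ((n:ℝ) / ((n:ℝ) - q)) ^ n := h1
          _ = ((((n:ℝ) - q) / n) ^ n)⁻¹ := h2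
          _ ≤ (1 - q)⁻¹ := h3
          _ ≤ (m:ℝ) + 1 := h4
      have hT1 : T = 1 := by
        rw [hTdef, hk0]
        simp
      rw [hT1]
      linarith [hSle]
    · -- main case : 1 ≤ k < n
      have hxk : x * n < (1 + x) * ((k:ℝ) + 1) := by
        have := mul_lt_mul_of_pos_left hq_lt hx1'
        linarith [hxn, this]
      -- terms are decreasing beyond k+1
      have hdec : ∀ w : ℕ, k + 1 ≤ w →
          (n.choose (w+1) : ℝ) * x ^ (w+1) ≤ (n.choose w : ℝ) * x ^ w := by
        intro w hw
        rcases le_or_gt n w with hnw | hwn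
        · have : n.choose (w+1) = 0 := Nat.choose_eq_zero_of_lt (by omega)
          rw [this]
          simpa using hterm_nonneg w
        · have hch : ((n.choose (w+1) : ℝ)) * ((w:ℝ) + 1) = (n.choose w : ℝ) * ((n:ℝ) - w) := by
            have := Nat.choose_succ_right_eq n w
            have hc2 : ((n.choose (w + 1) * (w + 1) : ℕ) : ℝ) = ((n.choose w * (n - w) : ℕ) : ℝ) := by
              exact_mod_cast congrArg (Nat.cast (R := ℝ)) this
            push_cast [Nat.cast_sub hwn.le] at hc2
            convert hc2 using 2
          have hw1 : (k:ℝ) + 1 ≤ (w:ℝ) := by exact_mod_cast hw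
          have hratio : x * ((n:ℝ) - w) ≤ (w:ℝ) + 1 := by
            nlinarith [hxk, hx0.le, hw1]
          have hxw : (0:ℝ) < x ^ w := pow_pos hx0 w
          have hwpos : (0:ℝ) < (w:ℝ) + 1 := by positivity
          rw [pow_succ]
          have hcnn : (0:ℝ) ≤ (n.choose w : ℝ) := by positivity
          have key : ((n.choose (w+1) : ℝ) * (x ^ w * x)) * ((w:ℝ) + 1)
              ≤ ((n.choose w : ℝ) * x ^ w) * ((w:ℝ) + 1) := by
            have e1 : ((n.choose (w+1) : ℝ) * (x ^ w * x)) * ((w:ℝ) + 1)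
                = ((n.choose (w+1) : ℝ) * ((w:ℝ) + 1)) * (x ^ w * x) := by ring
            rw [e1, hch]
            have h2 := mul_le_mul_of_nonneg_left hratio (mul_nonneg hcnn hxw.le)
            nlinarith [h2]
          exact le_of_mul_le_mul_right key hwpos
      have hmono : ∀ w : ℕ, k + 1 ≤ w →
          (n.choose w : ℝ) * x ^ w ≤ (n.choose (k+1) : ℝ) * x ^ (k+1) := by
        intro w hw
        induction w, hw using Nat.le_induction with
        | base => exact le_refl _
        | succ w hw ih => exact le_trans (hdec w hw) ih
      -- tail bound
      have htail : (∑ w ∈ Finset.Ico (k+1) (n+1), (n.choose w : ℝ) * x ^ w)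
          ≤ ((n:ℝ) - k) * ((n.choose (k+1) : ℝ) * x ^ (k+1)) := by
        have hcard : (Finset.Ico (k+1) (n+1)).card = n - k := by
          rw [Nat.card_Ico]; omega
        have := Finset.sum_le_card_nsmul (Finset.Ico (k+1) (n+1))
          (fun w => (n.choose w : ℝ) * x ^ w) ((n.choose (k+1) : ℝ) * x ^ (k+1))
          (fun w hw => hmono w (Finset.mem_Ico.1 hw).1)
        rw [hcard, nsmul_eq_mul] at this
        have hcast : ((n - k : ℕ) : ℝ) = (n:ℝ) - k := by
          rw [Nat.cast_sub hkn.le]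
        rw [hcast] at this
        exact this
      -- ratio identity at k
      have hch : ((n.choose (k+1) : ℝ)) * ((k:ℝ) + 1) = (n.choose k : ℝ) * ((n:ℝ) - k) := by
        have := Nat.choose_succ_right_eq n k
        have hc2 : ((n.choose (k + 1) * (k + 1) : ℕ) : ℝ) = ((n.choose k * (n - k) : ℕ) : ℝ) := by
          exact_mod_cast congrArg (Nat.cast (R := ℝ)) this
        push_cast [Nat.cast_sub hkn.le] at hc2
        convert hc2 using 2
      -- key arithmetic : x * (n-k)^2 ≤ m * (k+1)
      have hkey : x * ((n:ℝ) - k) ^ 2 ≤ (m:ℝ) * ((k:ℝ) + 1) := by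
        have hk1' : (1:ℝ) ≤ (k:ℝ) := by exact_mod_cast hk1
        have hkn' : (k:ℝ) + 1 ≤ (n:ℝ) := by exact_mod_cast hkn
        rcases eq_or_lt_of_le hkn' with heq | hlt
        · -- n = k+1, d = 1
          rw [← heq]
          have : ((k:ℝ) + 1 - k) = 1 := by ring
          rw [this]
          nlinarith [hk1', hm1, hx1, hx0.le, hnm']
        · -- n ≥ k+2, d ≥ 2
          set q : ℝ := (m:ℝ) / ℓ with hqdef
          clear_value q
          set d : ℝ := (n:ℝ) - k with hddef
          clear_value d
          have hd2 : (2:ℝ) ≤ d := by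
            have h1 : k + 1 < n := by exact_mod_cast hlt
            have h2 : k + 2 ≤ n := by omega
            have h3 : (k:ℝ) + 2 ≤ (n:ℝ) := by exact_mod_cast h2
            rw [hddef]; linarith
          have hnq : d - 1 < (n:ℝ) - q := by
            rw [hddef]
            linarith [hq_lt]
          have hnq0 : (0:ℝ) < (n:ℝ) - q := by linarith
          have hxq : x * ((n:ℝ) - q) < q := by nlinarith [hxn]
          -- ℓ(k+1) ≥ m+1
          have hlk : (m:ℝ) + 1 ≤ (ℓ:ℝ) * ((k:ℝ) + 1) := by
            have : (m:ℝ) + 1 ≤ ((ℓ * (k+1) : ℕ) : ℝ) := by exact_mod_cast hmlt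
            push_cast at this
            linarith
          -- d² ≤ ℓ(k+1)(n - q)
          have hd_le : d ^ 2 ≤ (ℓ:ℝ) * ((k:ℝ) + 1) * ((n:ℝ) - q) := by
            have h1 : ((n:ℝ) + 1) * (d - 1) ≥ d ^ 2 := by
              have : (n:ℝ) ≥ d + k := by rw [hddef]; ring_nf; linarith
              nlinarith [hd2, hk1', this]
            have h2 : (ℓ:ℝ) * ((k:ℝ) + 1) * ((n:ℝ) - q) ≥ ((n:ℝ) + 1) * (d - 1) := by
              have hdn : (0:ℝ) < d - 1 := by linarith
              have hln : (n:ℝ) + 1 ≤ (ℓ:ℝ) * ((k:ℝ) + 1) := by linarith [hnm', hlk]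
              nlinarith [hnq, hdn, hln, hnq0]
            linarith
          -- conclude : x d² ≤ m(k+1)
          have hq0 : 0 < q := by rw [hqdef]; positivity
          have hxd : x * d ^ 2 * ((n:ℝ) - q) ≤ q * d ^ 2 := by
            have h0 := mul_le_mul_of_nonneg_right hxq.le (sq_nonneg d)
            calc x * d ^ 2 * ((n:ℝ) - q) = x * ((n:ℝ) - q) * d ^ 2 := by ring
              _ ≤ q * d ^ 2 := h0
          have hqℓ : q * (ℓ:ℝ) = m := by rw [hqdef]; field_simp
          have hqd : q * d ^ 2 ≤ (m:ℝ) * ((k:ℝ) + 1) * ((n:ℝ) - q) := by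
            calc q * d ^ 2 ≤ q * ((ℓ:ℝ) * ((k:ℝ) + 1) * ((n:ℝ) - q)) :=
                  mul_le_mul_of_nonneg_left hd_le hq0.le
              _ = (q * (ℓ:ℝ)) * (((k:ℝ) + 1) * ((n:ℝ) - q)) := by ring
              _ = (m:ℝ) * (((k:ℝ) + 1) * ((n:ℝ) - q)) := by rw [hqℓ]
              _ = (m:ℝ) * ((k:ℝ) + 1) * ((n:ℝ) - q) := by ring
          have h5 : (x * d ^ 2) * ((n:ℝ) - q) ≤ ((m:ℝ) * ((k:ℝ) + 1)) * ((n:ℝ) - q) :=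
            le_trans hxd (le_of_eq_of_le (by ring) (le_of_le_of_eq hqd (by ring)))
          exact (mul_le_mul_iff_of_pos_right hnq0).1 h5
      -- put everything together
      have hsplit : (1 + x) ^ n = T + ∑ w ∈ Finset.Ico (k+1) (n+1), (n.choose w : ℝ) * x ^ w := by
        rw [hS, hTdef, Finset.range_eq_Ico, Finset.range_eq_Ico]
        exact (Finset.sum_Ico_consecutive (fun w => (n.choose w : ℝ) * x ^ w)
          (Nat.zero_le (k+1)) (show k + 1 ≤ n + 1 by omega)).symm
      have hTk : (n.choose k : ℝ) * x ^ k ≤ T := by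
        rw [hTdef]
        exact Finset.single_le_sum (fun w _ => hterm_nonneg w) (Finset.self_mem_range_succ k)
      have hterm_k1 : (n.choose (k+1) : ℝ) * x ^ (k+1)
          = (n.choose k : ℝ) * x ^ k * (x * ((n:ℝ) - k) / ((k:ℝ) + 1)) := by
        have hkpos : ((k:ℝ) + 1) ≠ 0 := by positivity
        field_simp
        linear_combination (x ^ (k+1)) * hch
      have htail2 : (∑ w ∈ Finset.Ico (k+1) (n+1), (n.choose w : ℝ) * x ^ w)
          ≤ (m:ℝ) * T := by
        have hkpos : (0:ℝ) < (k:ℝ) + 1 := by positivity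
        have hchoose_nn : (0:ℝ) ≤ (n.choose k : ℝ) * x ^ k := hterm_nonneg k
        calc (∑ w ∈ Finset.Ico (k+1) (n+1), (n.choose w : ℝ) * x ^ w)
            ≤ ((n:ℝ) - k) * ((n.choose (k+1) : ℝ) * x ^ (k+1)) := htail
          _ = (n.choose k : ℝ) * x ^ k * (x * ((n:ℝ) - k)^2 / ((k:ℝ) + 1)) := by
              rw [hterm_k1]; ring
          _ ≤ (n.choose k : ℝ) * x ^ k * (m:ℝ) := by
              apply mul_le_mul_of_nonneg_left _ hchoose_nn
              rw [div_le_iff₀ hkpos]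
              linarith [hkey]
          _ = (m:ℝ) * ((n.choose k : ℝ) * x ^ k) := by ring
          _ ≤ (m:ℝ) * T := by
              apply mul_le_mul_of_nonneg_left hTk (by positivity)
      rw [hsplit]
      linarith [htail2]
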